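/- Let (y_n)_{n∈ℕ} be a nonnegative real sequence satisfying y_{n+1} ≤ c·bⁿ·y_n^{1+ε} for all n ≥ 0, where c > 0, ε > 0 and b ≥ 1. Then for all n, y_n ≤ c^{((1+ε)ⁿ−1)/ε} · b^{((1+ε)ⁿ−1)/ε² − n/ε} · y_0^{(1+ε)ⁿ}. -/
import Mathlib


theorem stmt_8 (y : ℕ → ℝ) (c b ε : ℝ) (hc : 0 < c) (hε : 0 < ε) (hb : 1 ≤ b)
    (hy : ∀ n, 0 ≤ y n) (hrec : ∀ n, y (n + 1) ≤ c * b ^ n * y n ^ (1 + ε)) :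
    ∀ n, y n ≤ c ^ (((1 + ε) ^ n - 1) / ε)
        * b ^ (((1 + ε) ^ n - 1) / ε ^ 2 - n / ε)
        * y 0 ^ ((1 + ε) ^ n) := by
  have hb0 : (0:ℝ) < b := lt_of_lt_of_le one_pos hb
  have ha : (0:ℝ) ≤ 1 + ε := by linarith
  intro n
  induction n with
  | zero =>
    simp [Real.rpow_one]
  | succ n ih =>
    set A := ((1 + ε) ^ n - 1) / ε with hA
    set B := ((1 + ε) ^ n - 1) / ε ^ 2 - (n:ℝ) / ε with hB
    set E := ((1 + ε):ℝ) ^ n with hE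
    have key : y (n+1) ≤ c * b ^ n * (c ^ A * b ^ B * y 0 ^ E) ^ (1+ε) := by
      refine le_trans (hrec n) ?_
      have h1 : (0:ℝ) ≤ c * b ^ n := by positivity
      exact mul_le_mul_of_nonneg_left (Real.rpow_le_rpow (hy n) ih ha) h1
    refine le_trans key (le_of_eq ?_)
    have hy0 := hy 0
    rw [Real.mul_rpow (by positivity) (Real.rpow_nonneg hy0 E),
        Real.mul_rpow (by positivity) (by positivity),
        ← Real.rpow_natCast b n,
        ← Real.rpow_mul hc.le, ← Real.rpow_mul hb0.le, ← Real.rpow_mul hy0]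
    rw [show c * b ^ (n:ℝ) * (c ^ (A * (1+ε)) * b ^ (B * (1+ε)) * y 0 ^ (E * (1+ε)))
        = (c ^ (1:ℝ) * c ^ (A * (1+ε))) * (b ^ (n:ℝ) * b ^ (B * (1+ε))) * y 0 ^ (E * (1+ε))
        by rw [Real.rpow_one]; ring]
    rw [← Real.rpow_add hc, ← Real.rpow_add hb0]
    have e1 : 1 + A * (1+ε) = ((1 + ε) ^ (n+1) - 1) / ε := by
      rw [hA]; field_simp; ring
    have e2 : (n:ℝ) + B * (1+ε) = ((1 + ε) ^ (n+1) - 1) / ε ^ 2 - ((n:ℕ)+1 : ℕ) / ε := by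
      rw [hB]; push_cast; field_simp; ring
    have e3 : E * (1+ε) = (1 + ε) ^ (n+1) := by rw [hE]; ring
    rw [e1, e2, e3]
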